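/- Let k ≥ 2 be an integer, let x_1, …, x_{k-1} be k−1 integers each coprime with k, and let m be any integer. Then there exists a subset Z ⊆ {1, …, k−1} such that m ≡ ∑_{i∈Z} x_i (mod k). -/

import Mathlib

open Finset

/-- If a nonempty finset of `ZMod k` is closed under adding a unit, it is everything. -/
lemma closed_univ {k : ℕ} [NeZero k] (S : Finset (ZMod k)) (u : ZMod k)
    (hu : IsUnit u) (hS : ∀ s ∈ S, s + u ∈ S) (hne : S.Nonempty) : S = Finset.univ := by
  obtain ⟨s, hs⟩ := hne
  have key : ∀ n : ℕ, s + n • u ∈ S := by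
    intro n
    induction n with
    | zero => simpa using hs
    | succ n ih =>
      have := hS _ ih
      rwa [succ_nsmul, ← add_assoc]
  apply Finset.eq_univ_of_forall
  intro t
  have h1 : (((t - s) * u⁻¹).val : ZMod k) = (t - s) * u⁻¹ := ZMod.natCast_rightInverse _
  have h2 : t = s + ((t - s) * u⁻¹).val • u := by
    rw [nsmul_eq_mul, h1, mul_assoc, ZMod.inv_mul_of_unit u hu, mul_one]
    ring
  rw [h2]
  exact key _

theorem chowla_subset_sum (k : ℕ) (hk : 2 ≤ k) (x : Fin (k - 1) → ℤ)
    (hx : ∀ i, IsCoprime (x i) (k : ℤ)) (m : ℤ) :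
    ∃ Z : Finset (Fin (k - 1)), m ≡ ∑ i ∈ Z, x i [ZMOD (k : ℤ)] := by
  haveI : NeZero k := ⟨by omega⟩
  -- the x i are units mod k
  have hunit : ∀ i, IsUnit ((x i : ZMod k)) := by
    intro i
    obtain ⟨a, b, hab⟩ := hx i
    have : (a : ZMod k) * (x i : ZMod k) = 1 := by
      have := congrArg (fun z : ℤ => (z : ZMod k)) hab
      push_cast at this
      simpa [ZMod.natCast_self] using this
    exact IsUnit.of_mul_eq_one _ (mul_comm (a : ZMod k) _ ▸ this)
  set S : ℕ → Finset (ZMod k) :=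
    fun j => ((Finset.univ.filter (fun i : Fin (k-1) => (i : ℕ) < j)).powerset).image
      (fun Z => ∑ i ∈ Z, ((x i : ZMod k))) with hSdef
  have hmono : ∀ {j j' : ℕ}, j ≤ j' → S j ⊆ S j' := by
    intro j j' h
    apply Finset.image_subset_image
    apply Finset.powerset_mono.mpr
    intro i hi
    simp only [Finset.mem_filter] at hi ⊢
    exact ⟨hi.1, by omega⟩
  have hne : ∀ j, (S j).Nonempty := by
    intro j
    exact ⟨0, Finset.mem_image.mpr ⟨∅, by simp, by simp⟩⟩
  have grow : ∀ j, j + 1 ≤ k - 1 → j + 1 ≤ (S j).card ∨ S j = Finset.univ →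
      j + 2 ≤ (S (j+1)).card ∨ S (j+1) = Finset.univ := by
    intro j hj ih
    rcases ih with hcard | huniv
    · by_cases hclosed : ∀ s ∈ S j, s + (x ⟨j, by omega⟩ : ZMod k) ∈ S j
      · right
        have : S j = Finset.univ := closed_univ _ _ (hunit _) hclosed (hne j)
        exact Finset.univ_subset_iff.mp (this ▸ hmono (Nat.le_succ j))
      · left
        push_neg at hclosed
        obtain ⟨s, hs, hns⟩ := hclosed
        obtain ⟨Z, hZ, hZs⟩ := Finset.mem_image.mp hs
        rw [Finset.mem_powerset] at hZ
        have hjZ : (⟨j, by omega⟩ : Fin (k-1)) ∉ Z := by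
          intro hmem
          have := hZ hmem
          simp at this
        have hnew : s + (x ⟨j, by omega⟩ : ZMod k) ∈ S (j+1) := by
          apply Finset.mem_image.mpr
          refine ⟨insert ⟨j, by omega⟩ Z, ?_, ?_⟩
          · rw [Finset.mem_powerset]
            intro i hi
            rcases Finset.mem_insert.mp hi with h | h
            · subst h; simp
            · have := hZ h
              simp only [Finset.mem_filter] at this ⊢
              exact ⟨this.1, by omega⟩
          · rw [Finset.sum_insert hjZ, hZs, add_comm]
        have hsubset : insert (s + (x ⟨j, by omega⟩ : ZMod k)) (S j) ⊆ S (j+1) := by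
          intro t ht
          rcases Finset.mem_insert.mp ht with h | h
          · subst h; exact hnew
          · exact hmono (Nat.le_succ j) h
        calc j + 2 = (j + 1) + 1 := rfl
          _ ≤ (S j).card + 1 := by omega
          _ = (insert (s + (x ⟨j, by omega⟩ : ZMod k)) (S j)).card := by
              rw [Finset.card_insert_of_notMem hns]
          _ ≤ (S (j+1)).card := Finset.card_le_card hsubset
    · right
      exact Finset.univ_subset_iff.mp (huniv ▸ hmono (Nat.le_succ j))
  have main : ∀ j, j ≤ k - 1 → j + 1 ≤ (S j).card ∨ S j = Finset.univ := by
    intro j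
    induction j with
    | zero => intro _; left; exact (hne 0).card_pos
    | succ j ih =>
      intro hj
      exact grow j hj (ih (by omega))
  have hfin : S (k-1) = Finset.univ := by
    rcases main (k-1) le_rfl with h | h
    · apply Finset.eq_univ_of_card
      have hle : (S (k-1)).card ≤ (Finset.univ : Finset (ZMod k)).card :=
        Finset.card_le_card (Finset.subset_univ _)
      have : Fintype.card (ZMod k) = k := ZMod.card k
      simp [Finset.card_univ] at hle ⊢
      omega
    · exact h
  have hmem : (m : ZMod k) ∈ S (k-1) := hfin ▸ Finset.mem_univ _
  obtain ⟨Z, _, hZ⟩ := Finset.mem_image.mp hmem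
  refine ⟨Z, ?_⟩
  rw [← ZMod.intCast_eq_intCast_iff]
  rw [← hZ]
  push_cast
  rfl
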